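/- Let p(λ) ∈ ℝ[λ] be monic of degree n with a root λ₀ of multiplicity m ≥ 1, write p(λ) = (λ−λ₀)ᵐ h(λ) with h(λ₀) ≠ 0, and let r(λ) ∈ ℝ[λ] with r(λ₀) ≠ 0. Then for t → 0, the polynomial p(λ) − t·r(λ) has exactly m roots converging to λ₀, and these roots admit the expansion λⱼ(t) = λ₀ + (t·r(λ₀)/h(λ₀))^{1/m} ωⱼ + o(|t|^{1/m}), where ω₁,…,ωₘ are the m-th roots of unity. -/

import Mathlib

open Polynomial Asymptotics Real

lemma auxOmega_pow (m : ℕ) (hm : m ≠ 0) (j : ℕ) :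
    (Complex.exp (2 * Real.pi * Complex.I * j / m)) ^ m = 1 := by
  rw [← Complex.exp_nat_mul]
  have hm' : (m:ℂ) ≠ 0 := Nat.cast_ne_zero.2 hm
  have h1 : (m:ℂ) * (2 * Real.pi * Complex.I * j / m) = j * (2 * Real.pi * Complex.I) := by
    field_simp
  rw [h1, Complex.exp_nat_mul, Complex.exp_two_pi_mul_I, one_pow]

lemma auxOmega_abs (m j : ℕ) :
    ‖Complex.exp (2 * Real.pi * Complex.I * j / m)‖ = 1 := by
  have h1 : (2 * Real.pi * Complex.I * j / m) = ((2 * Real.pi * j / m : ℝ) : ℂ) * Complex.I := by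
    push_cast; ring
  rw [h1, Complex.norm_exp_ofReal_mul_I]

lemma auxOmega_inj (m : ℕ) (hm : m ≠ 0) {j k : ℕ} (hj : j < m) (hk : k < m)
    (h : Complex.exp (2 * Real.pi * Complex.I * j / m)
       = Complex.exp (2 * Real.pi * Complex.I * k / m)) : j = k := by
  have hprim := Complex.isPrimitiveRoot_exp m hm
  apply hprim.pow_inj hj hk
  rw [← Complex.exp_nat_mul, ← Complex.exp_nat_mul]
  rw [show (j:ℂ) * (2 * Real.pi * Complex.I / m) = 2 * Real.pi * Complex.I * j / m by ring,
    show (k:ℂ) * (2 * Real.pi * Complex.I / m) = 2 * Real.pi * Complex.I * k / m by ring, h]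

lemma auxOmega_classify (m : ℕ) (hm : m ≠ 0) {ζ : ℂ} (h : ζ ^ m = 1) :
    ∃ j < m, ζ = Complex.exp (2 * Real.pi * Complex.I * j / m) := by
  have : NeZero m := ⟨hm⟩
  obtain ⟨i, hi, hp⟩ := (Complex.isPrimitiveRoot_exp m hm).eq_pow_of_pow_eq_one h
  exact ⟨i, hi, by rw [← hp, ← Complex.exp_nat_mul]; congr 1; ring⟩

set_option maxHeartbeats 2000000 in
lemma auxSep {m : ℕ} (ω : Fin m → ℂ) (hωinj : Function.Injective ω) :
    ∃ ρ : ℝ, 0 < ρ ∧ ρ ≤ 1/2 ∧ ∀ j k : Fin m, j ≠ k → 2*ρ < ‖ω j - ω k‖ := by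
  by_cases hm1 : ∃ jk : Fin m × Fin m, jk.1 ≠ jk.2
  · have hSne : (Finset.univ.offDiag : Finset (Fin m × Fin m)).Nonempty := by
      obtain ⟨jk, hjk⟩ := hm1
      exact ⟨jk, Finset.mem_offDiag.2 ⟨Finset.mem_univ _, Finset.mem_univ _, hjk⟩⟩
    obtain ⟨jk₀, hjk₀, hjk₀eq⟩ := Finset.exists_mem_eq_inf' hSne
      (fun jk : Fin m × Fin m => ‖ω jk.1 - ω jk.2‖)
    have hdpos : 0 < ‖ω jk₀.1 - ω jk₀.2‖ := by
      have hne : jk₀.1 ≠ jk₀.2 := (Finset.mem_offDiag.1 hjk₀).2.2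
      have : ω jk₀.1 ≠ ω jk₀.2 := fun e => hne (hωinj e)
      rw [norm_pos_iff, sub_ne_zero]
      exact this
    have hd3 : (0:ℝ) < ‖ω jk₀.1 - ω jk₀.2‖ / 3 := by linarith
    refine ⟨min (1/2) (‖ω jk₀.1 - ω jk₀.2‖/3), lt_min (by norm_num) hd3, min_le_left _ _, ?_⟩
    intro j k hjk
    have h1 : ‖ω jk₀.1 - ω jk₀.2‖ ≤ ‖ω j - ω k‖ := by
      rw [← hjk₀eq]
      exact Finset.inf'_le (b := (j, k)) (fun jk : Fin m × Fin m => ‖ω jk.1 - ω jk.2‖) (Finset.mem_offDiag.2 ⟨Finset.mem_univ _, Finset.mem_univ _, hjk⟩)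
    have h2 : min (1/2) (‖ω jk₀.1 - ω jk₀.2‖/3) ≤ ‖ω jk₀.1 - ω jk₀.2‖/3 := min_le_right _ _
    linarith
  · push_neg at hm1
    exact ⟨1/2, by norm_num, le_refl _, fun j k hjk => absurd (hm1 (j, k)) hjk⟩

set_option maxHeartbeats 3000000 in
theorem perturbed_root_expansion (n m : ℕ) (hm : 1 ≤ m) (p r : ℝ[X])
    (hp : p.Monic) (hdeg : p.natDegree = n) (l₀ : ℂ) (h : ℂ[X])
    (hfact : p.map (algebraMap ℝ ℂ) = (X - C l₀) ^ m * h)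
    (hh : h.eval l₀ ≠ 0) (hr : (aeval l₀ r : ℂ) ≠ 0) :
    ∃ δ > (0 : ℝ), ∃ ε > (0 : ℝ), ∃ Λ : ℝ → Fin m → ℂ, ∃ c : ℝ → ℂ,
      ∃ e : ℝ → Fin m → ℂ,
      (∀ t : ℝ, (c t) ^ m = (t : ℂ) * (aeval l₀ r) / h.eval l₀) ∧
      (∀ t : ℝ, ∀ j : Fin m,
        Λ t j = l₀ + c t * Complex.exp (2 * Real.pi * Complex.I * (j : ℕ) / m)
          + e t j) ∧
      (∀ j : Fin m,
        (fun t : ℝ => e t j) =o[nhds (0 : ℝ)] fun t : ℝ => |t| ^ ((m : ℝ)⁻¹)) ∧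
      (∀ t : ℝ, t ≠ 0 → |t| < ε →
        Multiset.filter (fun z => ‖z - l₀‖ < δ)
            (((p - C t * r).map (algebraMap ℝ ℂ)).roots) =
          Multiset.map (Λ t) Finset.univ.val) := by
  classical
  have hm0 : m ≠ 0 := by omega
  obtain ⟨m', hmm'⟩ : ∃ m', m = m' + 1 := ⟨m - 1, by omega⟩
  have hmC : (m : ℂ) ≠ 0 := Nat.cast_ne_zero.2 hm0
  have hmR : (0:ℝ) < m := by exact_mod_cast Nat.pos_of_ne_zero hm0
  set rc : ℂ[X] := r.map (algebraMap ℝ ℂ) with hrcdef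
  have hr₀eq : (aeval l₀ r : ℂ) = rc.eval l₀ := by
    rw [hrcdef, eval_map, aeval_def]
  set r₀ : ℂ := rc.eval l₀ with hr₀def
  have hr₀ : r₀ ≠ 0 := hr₀eq ▸ hr
  set h₀ : ℂ := h.eval l₀ with hh₀def
  set a : ℂ := r₀ / h₀ with hadef
  have ha : a ≠ 0 := div_ne_zero hr₀ hh
  have hapos : (0:ℝ) < ‖a‖ := norm_pos_iff.2 ha
  have hh₀pos : (0:ℝ) < ‖h₀‖ := norm_pos_iff.2 hh
  set g : ℂ → ℂ := fun z => rc.eval z * h₀ / (h.eval z * r₀) with hgdef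
  set G : ℂ → ℂ := fun z => Complex.exp (Complex.log (g z) * (m:ℂ)⁻¹) with hGdef
  have hg1 : g l₀ = 1 := by
    rw [hgdef]; simp only [← hr₀def, ← hh₀def]
    field_simp
  have hG1 : G l₀ = 1 := by
    rw [hGdef]; simp only [hg1, Complex.log_one, zero_mul, Complex.exp_zero]
  have hgne : ∀ z : ℂ, ‖g z - 1‖ ≤ 1/2 → g z ≠ 0 := by
    intro z hz h0; rw [h0] at hz; norm_num at hz
  have hgslit : ∀ z : ℂ, ‖g z - 1‖ ≤ 1/2 → g z ∈ Complex.slitPlane := by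
    intro z hz
    have h1 : |(g z - 1).re| ≤ ‖g z - 1‖ := by
      exact Complex.abs_re_le_norm _
    have h2 : (g z - 1).re = (g z).re - 1 := by simp
    rw [h2] at h1
    have h3 := abs_le.1 h1
    exact Complex.mem_slitPlane_iff.2 (Or.inl (by linarith [h3.1]))
  have hGne : ∀ z : ℂ, G z ≠ 0 := fun z => Complex.exp_ne_zero _
  have hGpow : ∀ z : ℂ, g z ≠ 0 → (G z) ^ m = g z := by
    intro z hz
    rw [hGdef]; simp only
    rw [← Complex.exp_nat_mul,
      show (m:ℂ) * (Complex.log (g z) * (m:ℂ)⁻¹) = Complex.log (g z) by field_simp,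
      Complex.exp_log hz]
  -- uniform smallness of G - 1 on small balls
  have hsmall : ∀ η : ℝ, 0 < η → ∃ d : ℝ, 0 < d ∧ ∀ z ∈ Metric.closedBall l₀ d,
      h.eval z ≠ 0 ∧ ‖h₀‖/2 ≤ ‖h.eval z‖ ∧ ‖g z - 1‖ ≤ 1/2 ∧ ‖G z - 1‖ ≤ η := by
    intro η hη
    have ch : ContinuousAt (fun z : ℂ => h.eval z) l₀ := h.continuousAt
    have crc : ContinuousAt (fun z : ℂ => rc.eval z) l₀ := rc.continuousAt
    have cg : ContinuousAt g l₀ := by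
      rw [hgdef]
      exact (crc.mul continuousAt_const).div (ch.mul continuousAt_const)
        (by rw [← hh₀def]; exact mul_ne_zero hh hr₀)
    have cG : ContinuousAt G l₀ := by
      rw [hGdef]
      exact Complex.continuous_exp.continuousAt.comp
        ((cg.clog (by rw [hg1]; exact Complex.mem_slitPlane_iff.2 (Or.inl (by norm_num)))).mul
          continuousAt_const)
    have E1 : ∀ᶠ z in nhds l₀, dist (h.eval z) (h.eval l₀) < ‖h₀‖/2 :=
      Metric.tendsto_nhds.mp ch _ (by linarith)
    have E2 : ∀ᶠ z in nhds l₀, dist (g z) (g l₀) < 1/2 :=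
      Metric.tendsto_nhds.mp cg _ (by norm_num)
    have E3 : ∀ᶠ z in nhds l₀, dist (G z) (G l₀) < η :=
      Metric.tendsto_nhds.mp cG _ hη
    have E := (E1.and E2).and E3
    rw [Metric.eventually_nhds_iff] at E
    obtain ⟨d0, hd0, hE⟩ := E
    refine ⟨d0/2, by linarith, ?_⟩
    intro z hz
    have hz' : dist z l₀ < d0 := lt_of_le_of_lt (Metric.mem_closedBall.1 hz) (by linarith)
    obtain ⟨⟨e1, e2⟩, e3⟩ := hE hz'
    rw [dist_eq_norm] at e1 e2 e3
    rw [hg1] at e2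
    rw [hG1] at e3
    have hhz : ‖h₀‖/2 ≤ ‖h.eval z‖ := by
      have h4 : ‖h.eval l₀‖ - ‖h.eval z‖ ≤ ‖h.eval z - h.eval l₀‖ := by
        rw [norm_sub_rev]; exact norm_sub_norm_le _ _
      rw [← hh₀def] at h4 e1
      linarith
    refine ⟨?_, hhz, e2.le, e3.le⟩
    intro h0
    rw [h0, norm_zero] at hhz
    linarith
  obtain ⟨δ₁, hδ₁pos, hδ₁⟩ := hsmall 1 one_pos
  -- bounds on polynomial evaluations
  obtain ⟨M1, hM1⟩ := (isCompact_closedBall l₀ δ₁).exists_bound_of_continuousOn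
      (h.continuous.continuousOn)
  obtain ⟨M2, hM2⟩ := (isCompact_closedBall l₀ δ₁).exists_bound_of_continuousOn
      (rc.continuous.continuousOn)
  obtain ⟨M3, hM3⟩ := (isCompact_closedBall l₀ δ₁).exists_bound_of_continuousOn
      ((derivative h).continuous.continuousOn)
  obtain ⟨M4, hM4⟩ := (isCompact_closedBall l₀ δ₁).exists_bound_of_continuousOn
      ((derivative rc).continuous.continuousOn)
  set Mb : ℝ := max (max M1 M2) (max M3 M4) + 1 with hMbdef
  have hMbpos : 0 < Mb := by
    have h1 := hM1 l₀ (Metric.mem_closedBall_self hδ₁pos.le)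
    have h2 : (0:ℝ) ≤ M1 := le_trans (norm_nonneg _) h1
    have : M1 ≤ max (max M1 M2) (max M3 M4) := le_trans (le_max_left _ _) (le_max_left _ _)
    rw [hMbdef]; linarith
  have hMbh : ∀ z ∈ Metric.closedBall l₀ δ₁, ‖h.eval z‖ ≤ Mb := by
    intro z hz
    have := hM1 z hz
    have h1 : M1 ≤ max (max M1 M2) (max M3 M4) := le_trans (le_max_left _ _) (le_max_left _ _)
    rw [hMbdef]; linarith
  have hMbrc : ∀ z ∈ Metric.closedBall l₀ δ₁, ‖rc.eval z‖ ≤ Mb := by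
    intro z hz
    have := hM2 z hz
    have h1 : M2 ≤ max (max M1 M2) (max M3 M4) := le_trans (le_max_right _ _) (le_max_left _ _)
    rw [hMbdef]; linarith
  have hMbh' : ∀ z ∈ Metric.closedBall l₀ δ₁, ‖(derivative h).eval z‖ ≤ Mb := by
    intro z hz
    have := hM3 z hz
    have h1 : M3 ≤ max (max M1 M2) (max M3 M4) := le_trans (le_max_left _ _) (le_max_right _ _)
    rw [hMbdef]; linarith
  have hMbrc' : ∀ z ∈ Metric.closedBall l₀ δ₁, ‖(derivative rc).eval z‖ ≤ Mb := by
    intro z hz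
    have := hM4 z hz
    have h1 : M4 ≤ max (max M1 M2) (max M3 M4) := le_trans (le_max_right _ _) (le_max_right _ _)
    rw [hMbdef]; linarith
  -- derivative of G on the ball
  set g' : ℂ → ℂ := fun z =>
      ((derivative rc).eval z * h₀ * (h.eval z * r₀)
        - rc.eval z * h₀ * ((derivative h).eval z * r₀)) / (h.eval z * r₀)^2 with hg'def
  have hGderiv : ∀ z ∈ Metric.closedBall l₀ δ₁,
      HasDerivAt G (G z * (g' z / g z * (m:ℂ)⁻¹)) z := by
    intro z hz
    obtain ⟨hz1, hz2, hz3, hz4⟩ := hδ₁ z hz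
    have hd0 : h.eval z * r₀ ≠ 0 := mul_ne_zero hz1 hr₀
    have h1 : HasDerivAt (fun w => rc.eval w * h₀) ((derivative rc).eval z * h₀) z :=
      (rc.hasDerivAt z).mul_const h₀
    have h2 : HasDerivAt (fun w => h.eval w * r₀) ((derivative h).eval z * r₀) z :=
      (h.hasDerivAt z).mul_const r₀
    have h3 : HasDerivAt g (g' z) z := by
      rw [hgdef, hg'def]; exact h1.div h2 hd0
    have h4 : HasDerivAt (fun w => Complex.log (g w)) (g' z / g z) z :=
      h3.clog (hgslit z hz3)
    have h5 := (h4.mul_const ((m:ℂ)⁻¹)).cexp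
    rw [hGdef]
    exact h5
  -- Lipschitz constant for G
  set K0 : ℝ := (2 * Mb^2 * ‖h₀‖ * ‖r₀‖) / ((‖h₀‖/2)^2 * ‖r₀‖^2) with hK0def
  have hr₀pos : (0:ℝ) < ‖r₀‖ := norm_pos_iff.2 hr₀
  have hK0nn : 0 ≤ K0 := by positivity
  set KR : ℝ := 4 * K0 + 1 with hKRdef
  have hKRpos : 0 < KR := by positivity
  have hG'bound : ∀ z ∈ Metric.closedBall l₀ δ₁, ‖G z * (g' z / g z * (m:ℂ)⁻¹)‖ ≤ KR := by
    intro z hz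
    obtain ⟨hz1, hz2, hz3, hz4⟩ := hδ₁ z hz
    have hGz : ‖G z‖ ≤ 2 := by
      have := norm_add_le (G z - 1) 1
      simp only [sub_add_cancel] at this
      rw [norm_one] at this; linarith
    have hgz : (1:ℝ)/2 ≤ ‖g z‖ := by
      have h4 : ‖(1:ℂ)‖ - ‖g z‖ ≤ ‖g z - 1‖ := by
        rw [norm_sub_rev]; exact norm_sub_norm_le _ _
      rw [norm_one] at h4; linarith
    have hg'z : ‖g' z‖ ≤ K0 := by
      rw [hg'def]; simp only
      rw [norm_div]
      have hnum : ‖(derivative rc).eval z * h₀ * (h.eval z * r₀)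
          - rc.eval z * h₀ * ((derivative h).eval z * r₀)‖ ≤ 2 * Mb^2 * ‖h₀‖ * ‖r₀‖ := by
        have t1 : ‖(derivative rc).eval z * h₀ * (h.eval z * r₀)‖ ≤ Mb * ‖h₀‖ * (Mb * ‖r₀‖) := by
          rw [norm_mul, norm_mul, norm_mul]
          gcongr
          · exact hMbrc' z hz
          · exact hMbh z hz
        have t2 : ‖rc.eval z * h₀ * ((derivative h).eval z * r₀)‖ ≤ Mb * ‖h₀‖ * (Mb * ‖r₀‖) := by
          rw [norm_mul, norm_mul, norm_mul]
          gcongr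
          · exact hMbrc z hz
          · exact hMbh' z hz
        calc ‖_ - _‖ ≤ _ + _ := norm_sub_le _ _
          _ ≤ Mb * ‖h₀‖ * (Mb * ‖r₀‖) + Mb * ‖h₀‖ * (Mb * ‖r₀‖) := add_le_add t1 t2
          _ = 2 * Mb^2 * ‖h₀‖ * ‖r₀‖ := by ring
      have hden : (‖h₀‖/2)^2 * ‖r₀‖^2 ≤ ‖(h.eval z * r₀)^2‖ := by
        rw [norm_pow, norm_mul, mul_pow]
        gcongr
      rw [hK0def]
      have hdenpos : (0:ℝ) < (‖h₀‖/2)^2 * ‖r₀‖^2 := by positivity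
      exact div_le_div₀ (by positivity) hnum hdenpos hden
    have hmn : ‖((m:ℂ))⁻¹‖ ≤ 1 := by
      rw [norm_inv, Complex.norm_natCast]
      rw [inv_le_one_iff₀]
      right; exact_mod_cast hm
    have hq0 : (0:ℝ) ≤ ‖g' z‖ / ‖g z‖ := by positivity
    have hqle : ‖g' z‖ / ‖g z‖ ≤ 2 * K0 := by
      have := div_le_div₀ hK0nn hg'z (by norm_num : (0:ℝ) < 1/2) hgz
      calc ‖g' z‖ / ‖g z‖ ≤ K0 / (1/2) := this
        _ = 2 * K0 := by ring
    rw [norm_mul, norm_mul, norm_div]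
    calc ‖G z‖ * (‖g' z‖ / ‖g z‖ * ‖((m:ℂ))⁻¹‖)
        ≤ 2 * (2 * K0 * 1) := by
          apply mul_le_mul hGz _ (by positivity) (by norm_num)
          exact mul_le_mul hqle hmn (norm_nonneg _) (by positivity)
      _ ≤ KR := by rw [hKRdef]; linarith
  have hδhalf : Metric.closedBall l₀ (δ₁/2) ⊆ Metric.closedBall l₀ δ₁ :=
    Metric.closedBall_subset_closedBall (by linarith)
  have hGdiff2 : ∀ z ∈ Metric.closedBall l₀ (δ₁/2), ∀ z' ∈ Metric.closedBall l₀ (δ₁/2),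
      ‖G z - G z'‖ ≤ KR * ‖z - z'‖ := by
    intro z hz z' hz'
    exact (convex_closedBall l₀ (δ₁/2)).norm_image_sub_le_of_norm_hasDerivWithin_le
      (fun x hx => (hGderiv x (hδhalf hx)).hasDerivWithinAt)
      (fun x hx => hG'bound x (hδhalf hx)) hz' hz
  -- roots of unity
  set ω : Fin m → ℂ := fun j => Complex.exp (2 * Real.pi * Complex.I * (j:ℕ) / m) with hωdef
  have hωabs : ∀ j, ‖ω j‖ = 1 := fun j => by
    rw [hωdef]; simp only; exact auxOmega_abs m j
  have hωpow : ∀ j : Fin m, ω j ^ m = 1 := fun j => auxOmega_pow m hm0 j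
  have hωinj : Function.Injective ω := by
    intro j k hjk
    exact Fin.ext (auxOmega_inj m hm0 j.isLt k.isLt hjk)
  obtain ⟨ρ, hρpos, hρhalf, hρsep⟩ := auxSep ω hωinj
  -- the final δ
  obtain ⟨δ₂, hδ₂pos, hδ₂⟩ := hsmall ρ hρpos
  set δ : ℝ := min δ₂ (δ₁/2) with hδdef
  have hδpos : 0 < δ := lt_min hδ₂pos (by linarith)
  have hδsub2 : Metric.closedBall l₀ δ ⊆ Metric.closedBall l₀ δ₂ :=
    Metric.closedBall_subset_closedBall (min_le_left _ _)
  have hδsub12 : Metric.closedBall l₀ δ ⊆ Metric.closedBall l₀ (δ₁/2) :=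
    Metric.closedBall_subset_closedBall (min_le_right _ _)
  have hδsub1 : Metric.closedBall l₀ δ ⊆ Metric.closedBall l₀ δ₁ :=
    fun z hz => hδhalf (hδsub12 hz)
  have hδball : ∀ z ∈ Metric.closedBall l₀ δ,
      h.eval z ≠ 0 ∧ ‖h₀‖/2 ≤ ‖h.eval z‖ ∧ ‖g z - 1‖ ≤ 1/2 ∧ ‖G z - 1‖ ≤ ρ :=
    fun z hz => hδ₂ z (hδsub2 hz)
  -- constants for the derivative estimate
  set b : ℝ := m * (1/2)^(m-1) * (‖h₀‖/2) with hbdef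
  have hbpos : 0 < b := by
    rw [hbdef]; positivity
  set B : ℝ := (3/2)^m * Mb + (‖h₀‖/‖r₀‖) * Mb with hBdef
  have hBnn : 0 ≤ B := by rw [hBdef]; positivity
  -- the smallness threshold
  set u_max : ℝ := min (δ/(1+ρ)) (min (1/(2*(KR+1))) (b/(2*(B+1)))) with humdef
  have hupos : 0 < u_max := by
    rw [humdef]
    refine lt_min (by positivity) (lt_min (by positivity) (by positivity))
  have hum1 : u_max * (1+ρ) ≤ δ := by
    have h1 : u_max ≤ δ/(1+ρ) := min_le_left _ _
    have h2 := mul_le_mul_of_nonneg_right h1 (add_nonneg zero_le_one hρpos.le)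
    rwa [div_mul_cancel₀ _ (by linarith : (1:ℝ)+ρ ≠ 0)] at h2
  have hum2 : KR * u_max ≤ 1/2 := by
    have h1 : u_max ≤ 1/(2*(KR+1)) := le_trans (min_le_right _ _) (min_le_left _ _)
    have h2 : KR * u_max ≤ KR * (1/(2*(KR+1))) := by
      apply mul_le_mul_of_nonneg_left h1 hKRpos.le
    have h3 : KR * (1/(2*(KR+1))) ≤ 1/2 := by
      rw [mul_one_div, div_le_div_iff₀ (by positivity) (by norm_num)]
      nlinarith
    linarith
  have hum3 : u_max * B < b := by
    have h1 : u_max ≤ b/(2*(B+1)) := le_trans (min_le_right _ _) (min_le_right _ _)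
    have h2 : u_max * B ≤ (b/(2*(B+1))) * B := mul_le_mul_of_nonneg_right h1 hBnn
    have h3 : (b/(2*(B+1))) * B < b := by
      rw [div_mul_eq_mul_div, div_lt_iff₀ (by positivity)]
      nlinarith [mul_nonneg hbpos.le hBnn, mul_pos hbpos (by linarith : (0:ℝ) < B + 2)]
    exact lt_of_le_of_lt h2 h3
  set ε : ℝ := u_max^m / ‖a‖ with hεdef
  have hεpos : 0 < ε := by rw [hεdef]; positivity
  -- the m-th root function
  set c : ℝ → ℂ := fun t => if t = 0 then 0 else Complex.exp (Complex.log ((t:ℂ) * a) / m)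
    with hcdef
  have hcm : ∀ t : ℝ, (c t)^m = (t:ℂ) * a := by
    intro t
    rw [hcdef]; simp only
    by_cases ht : t = 0
    · simp [ht, zero_pow hm0]
    · rw [if_neg ht, ← Complex.exp_nat_mul,
        show (m:ℂ) * (Complex.log ((t:ℂ) * a) / m) = Complex.log ((t:ℂ) * a) by field_simp,
        Complex.exp_log (mul_ne_zero (Complex.ofReal_ne_zero.2 ht) ha)]
  have hcnorm : ∀ t : ℝ, ‖c t‖^m = |t| * ‖a‖ := by
    intro t
    rw [← norm_pow, hcm, norm_mul, Complex.norm_real, Real.norm_eq_abs]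
  have hc0 : ∀ t : ℝ, t ≠ 0 → c t ≠ 0 := by
    intro t ht
    rw [hcdef]; simp only [if_neg ht]
    exact Complex.exp_ne_zero _
  have hcsmall : ∀ t : ℝ, |t| < ε → ‖c t‖ < u_max := by
    intro t htε
    have h1 : ‖c t‖^m < u_max^m := by
      rw [hcnorm t]
      calc |t| * ‖a‖ < ε * ‖a‖ := mul_lt_mul_of_pos_right htε hapos
        _ = u_max^m := by rw [hεdef, div_mul_cancel₀ _ (ne_of_gt hapos)]
    exact lt_of_pow_lt_pow_left₀ m hupos.le h1
  -- contraction machinery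
  have hΦmaps : ∀ u : ℂ, ‖u‖ ≤ u_max → ∀ j : Fin m, ∀ w ∈ Metric.closedBall (ω j) ρ,
      l₀ + u * w ∈ Metric.closedBall l₀ δ ∧
        ω j * G (l₀ + u * w) ∈ Metric.closedBall (ω j) ρ := by
    intro u hu j w hw
    have hwd : ‖w - ω j‖ ≤ ρ := by rwa [Metric.mem_closedBall, dist_eq_norm] at hw
    have hwnorm : ‖w‖ ≤ 1 + ρ := by
      calc ‖w‖ = ‖ω j + (w - ω j)‖ := by ring_nf
        _ ≤ ‖ω j‖ + ‖w - ω j‖ := norm_add_le _ _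
        _ ≤ 1 + ρ := by rw [hωabs]; linarith
    have hz : l₀ + u * w ∈ Metric.closedBall l₀ δ := by
      rw [Metric.mem_closedBall, dist_eq_norm, add_sub_cancel_left, norm_mul]
      calc ‖u‖ * ‖w‖ ≤ u_max * (1+ρ) :=
            mul_le_mul hu hwnorm (norm_nonneg _) hupos.le
        _ ≤ δ := hum1
    refine ⟨hz, ?_⟩
    rw [Metric.mem_closedBall, dist_eq_norm,
      show ω j * G (l₀ + u * w) - ω j = ω j * (G (l₀ + u * w) - 1) by ring,
      norm_mul, hωabs, one_mul]
    exact (hδball _ hz).2.2.2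
  have hΦlip : ∀ u : ℂ, ‖u‖ ≤ u_max → ∀ j : Fin m, ∀ w ∈ Metric.closedBall (ω j) ρ,
      ∀ w' ∈ Metric.closedBall (ω j) ρ,
      ‖ω j * G (l₀ + u * w) - ω j * G (l₀ + u * w')‖ ≤ (1/2) * ‖w - w'‖ := by
    intro u hu j w hw w' hw'
    have hz := (hΦmaps u hu j w hw).1
    have hz' := (hΦmaps u hu j w' hw').1
    rw [show ω j * G (l₀ + u * w) - ω j * G (l₀ + u * w')
        = ω j * (G (l₀ + u * w) - G (l₀ + u * w')) by ring, norm_mul, hωabs, one_mul]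
    have h3 := hGdiff2 (l₀ + u * w) (hδsub12 hz) (l₀ + u * w') (hδsub12 hz')
    have h4 : ‖(l₀ + u * w) - (l₀ + u * w')‖ = ‖u‖ * ‖w - w'‖ := by
      rw [show (l₀ + u * w) - (l₀ + u * w') = u * (w - w') by ring, norm_mul]
    calc ‖G (l₀ + u * w) - G (l₀ + u * w')‖ ≤ KR * (‖u‖ * ‖w - w'‖) := by rw [← h4]; exact h3
      _ ≤ KR * (u_max * ‖w - w'‖) := by
          apply mul_le_mul_of_nonneg_left _ hKRpos.le
          exact mul_le_mul_of_nonneg_right hu (norm_nonneg _)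
      _ = (KR * u_max) * ‖w - w'‖ := by ring
      _ ≤ (1/2) * ‖w - w'‖ := mul_le_mul_of_nonneg_right hum2 (norm_nonneg _)
  have hΦfix : ∀ u : ℂ, ‖u‖ ≤ u_max → ∀ j : Fin m,
      ∃ w, w ∈ Metric.closedBall (ω j) ρ ∧ ω j * G (l₀ + u * w) = w := by
    intro u hu j
    set Φ : ℂ → ℂ := fun w => ω j * G (l₀ + u * w) with hΦ
    have hmaps : Set.MapsTo Φ (Metric.closedBall (ω j) ρ) (Metric.closedBall (ω j) ρ) :=
      fun w hw => (hΦmaps u hu j w hw).2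
    have hcl : IsComplete (Metric.closedBall (ω j) ρ) :=
      (Metric.isClosed_closedBall).isComplete
    have hlip : LipschitzOnWith (1/2 : NNReal) Φ (Metric.closedBall (ω j) ρ) := by
      apply LipschitzOnWith.of_dist_le_mul
      intro x hx y hy
      rw [dist_eq_norm, dist_eq_norm]
      have := hΦlip u hu j x hx y hy
      rw [hΦ]
      simpa using this
    have hcontr : ContractingWith (1/2) (hmaps.restrict Φ _ _) :=
      ⟨by rw [← NNReal.coe_lt_coe]; push_cast; norm_num, hlip.mapsToRestrict hmaps⟩
    obtain ⟨w, hws, hwfix, -, -⟩ := hcontr.exists_fixedPoint' hcl hmaps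
      (Metric.mem_closedBall_self hρpos.le) (edist_ne_top _ _)
    exact ⟨w, hws, hwfix⟩
  have hΦuniq : ∀ u : ℂ, ‖u‖ ≤ u_max → ∀ j : Fin m, ∀ w ∈ Metric.closedBall (ω j) ρ,
      ∀ w' ∈ Metric.closedBall (ω j) ρ,
      ω j * G (l₀ + u * w) = w → ω j * G (l₀ + u * w') = w' → w = w' := by
    intro u hu j w hw w' hw' he he'
    have h1 := hΦlip u hu j w hw w' hw'
    rw [he, he'] at h1
    have h0 : ‖w - w'‖ = 0 := by linarith [norm_nonneg (w - w')]
    rwa [norm_eq_zero, sub_eq_zero] at h0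
  have hufact : ∀ t : ℝ, |t| < ε → ‖c t‖ ≤ u_max := fun t hte => (hcsmall t hte).le
  set W : ℝ → Fin m → ℂ := fun t j =>
    if H : |t| < ε then Classical.choose (hΦfix (c t) (hufact t H) j) else ω j with hWdef
  have hWspec : ∀ t : ℝ, |t| < ε → ∀ j : Fin m,
      W t j ∈ Metric.closedBall (ω j) ρ ∧ ω j * G (l₀ + c t * W t j) = W t j := by
    intro t H j
    rw [hWdef]; simp only [dif_pos H]
    exact Classical.choose_spec (hΦfix (c t) (hufact t H) j)
  refine ⟨δ, hδpos, ε, hεpos, (fun t j => l₀ + c t * W t j), c,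
    (fun t j => c t * (W t j - ω j)), ?_, ?_, ?_, ?_⟩
  · -- the m-th root property
    intro t
    rw [hcm t, hr₀eq, hadef, mul_div_assoc]
  · -- decomposition
    intro t j
    simp only [hωdef]
    ring
  · -- little-o
    intro j
    rw [isLittleO_iff]
    intro C₀ hC₀
    have h0C : (0:ℝ) < ‖a‖ ^ ((m:ℝ)⁻¹) + 1 := by positivity
    set η : ℝ := C₀ / (‖a‖ ^ ((m:ℝ)⁻¹) + 1) with hηdef
    have hηpos : 0 < η := div_pos hC₀ h0C
    obtain ⟨d, hdpos, hd⟩ := hsmall η hηpos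
    have hmd0 : (0:ℝ) < min d δ := lt_min hdpos hδpos
    have hρ1 : (0:ℝ) < 1 + ρ := by linarith
    have hthr : (0:ℝ) < (min d δ/(1+ρ))^m / ‖a‖ := by positivity
    have hτpos : (0:ℝ) < min ε ((min d δ/(1+ρ))^m / ‖a‖) := lt_min hεpos hthr
    filter_upwards [Metric.ball_mem_nhds (0:ℝ) hτpos] with t htmem
    rw [Metric.mem_ball, Real.dist_eq, sub_zero] at htmem
    have htε : |t| < ε := lt_of_lt_of_le htmem (min_le_left _ _)
    have ht2 : |t| < (min d δ/(1+ρ))^m / ‖a‖ := lt_of_lt_of_le htmem (min_le_right _ _)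
    have hrhs : ‖|t| ^ ((m:ℝ)⁻¹)‖ = |t| ^ ((m:ℝ)⁻¹) := by
      rw [Real.norm_eq_abs, abs_of_nonneg (Real.rpow_nonneg (abs_nonneg t) _)]
    obtain ⟨hwball, hwfix⟩ := hWspec t htε j
    have hwd : ‖W t j - ω j‖ ≤ ρ := by rwa [Metric.mem_closedBall, dist_eq_norm] at hwball
    have hwnorm : ‖W t j‖ ≤ 1 + ρ := by
      calc ‖W t j‖ = ‖ω j + (W t j - ω j)‖ := by ring_nf
        _ ≤ ‖ω j‖ + ‖W t j - ω j‖ := norm_add_le _ _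
        _ ≤ 1 + ρ := by rw [hωabs]; linarith
    have hu2 : ‖c t‖ ≤ min d δ/(1+ρ) := by
      have h1 : ‖c t‖^m ≤ (min d δ/(1+ρ))^m := by
        rw [hcnorm t]
        calc |t| * ‖a‖ ≤ ((min d δ/(1+ρ))^m / ‖a‖) * ‖a‖ :=
              mul_le_mul_of_nonneg_right ht2.le hapos.le
          _ = (min d δ/(1+ρ))^m := div_mul_cancel₀ _ (ne_of_gt hapos)
      exact le_of_pow_le_pow_left₀ hm0 (by positivity) h1
    have hzd : l₀ + c t * W t j ∈ Metric.closedBall l₀ d := by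
      rw [Metric.mem_closedBall, dist_eq_norm, add_sub_cancel_left, norm_mul]
      calc ‖c t‖ * ‖W t j‖ ≤ (min d δ/(1+ρ)) * (1+ρ) :=
            mul_le_mul hu2 hwnorm (norm_nonneg _) (by positivity)
        _ = min d δ := div_mul_cancel₀ _ (ne_of_gt hρ1)
        _ ≤ d := min_le_left _ _
    have hG1d : ‖G (l₀ + c t * W t j) - 1‖ ≤ η := (hd _ hzd).2.2.2
    have hWω : ‖W t j - ω j‖ ≤ η := by
      rw [← hwfix,
        show ω j * G (l₀ + c t * W t j) - ω j = ω j * (G (l₀ + c t * W t j) - 1) by ring,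
        norm_mul, hωabs, one_mul]
      exact hG1d
    have hcval : ‖c t‖ = (|t| * ‖a‖) ^ ((m:ℝ)⁻¹) := by
      rw [← Real.pow_rpow_inv_natCast (norm_nonneg (c t)) hm0, hcnorm t]
    rw [norm_mul, hrhs]
    calc ‖c t‖ * ‖W t j - ω j‖ ≤ (|t| * ‖a‖) ^ ((m:ℝ)⁻¹) * η := by
          rw [hcval]
          exact mul_le_mul_of_nonneg_left hWω (Real.rpow_nonneg (by positivity) _)
      _ = η * ‖a‖ ^ ((m:ℝ)⁻¹) * |t| ^ ((m:ℝ)⁻¹) := by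
          rw [Real.mul_rpow (abs_nonneg t) hapos.le]; ring
      _ ≤ C₀ * |t| ^ ((m:ℝ)⁻¹) := by
          apply mul_le_mul_of_nonneg_right _ (Real.rpow_nonneg (abs_nonneg t) _)
          rw [hηdef, div_mul_eq_mul_div, div_le_iff₀ h0C]
          nlinarith [Real.rpow_nonneg (norm_nonneg a) ((m:ℝ)⁻¹)]
  · -- the multiset of roots
    intro t ht htε
    have hu0 : c t ≠ 0 := hc0 t ht
    have hule : ‖c t‖ ≤ u_max := hufact t htε
    have hulte : ‖c t‖ < u_max := hcsmall t htε
    have htC : (t:ℂ) ≠ 0 := Complex.ofReal_ne_zero.2 ht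
    have hum : (c t)^m = (t:ℂ) * a := hcm t
    set q : ℂ[X] := (p - C t * r).map (algebraMap ℝ ℂ) with hqdef
    have hqeq : q = (X - Polynomial.C l₀)^m * h - Polynomial.C (t:ℂ) * rc := by
      rw [hqdef, Polynomial.map_sub, hfact, Polynomial.map_mul, Polynomial.map_C, hrcdef]
      norm_num [Complex.coe_algebraMap]
    have heval : ∀ z : ℂ, q.eval z = (z - l₀)^m * h.eval z - (t:ℂ) * rc.eval z := by
      intro z
      rw [hqeq]
      simp [eval_sub, eval_mul, eval_pow, eval_C, eval_X]
    have hqne : q ≠ 0 := by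
      intro h0
      have h2 : (t:ℂ) * r₀ = 0 := by
        have h1 := heval l₀
        rw [h0] at h1
        simpa [zero_pow hm0, ← hr₀def, eq_comm] using h1
      rcases mul_eq_zero.1 h2 with h3 | h3
      · exact htC h3
      · exact hr₀ h3
    have hderiv : ∀ z : ℂ, (derivative q).eval z
        = m * (z - l₀)^(m-1) * h.eval z + (z - l₀)^m * (derivative h).eval z
          - (t:ℂ) * (derivative rc).eval z := by
      intro z
      rw [hqeq, derivative_sub, derivative_mul, derivative_pow, derivative_X_sub_C,
        derivative_C_mul]
      simp only [eval_sub, eval_add, eval_mul, eval_pow, eval_C, eval_X, eval_one, mul_one]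
    have hpowm : ∀ x : ℂ, x ^ m = x ^ (m - 1) * x := by
      intro x
      conv_lhs => rw [hmm', pow_succ]
      rw [hmm', Nat.add_sub_cancel]
    -- forward: the candidate roots are roots
    have hzform : ∀ j : Fin m, ‖(l₀ + c t * W t j) - l₀‖ < δ ∧ q.eval (l₀ + c t * W t j) = 0 := by
      intro j
      obtain ⟨hwball, hwfix⟩ := hWspec t htε j
      have hwd : ‖W t j - ω j‖ ≤ ρ := by rwa [Metric.mem_closedBall, dist_eq_norm] at hwball
      have hwnorm : ‖W t j‖ ≤ 1 + ρ := by
        calc ‖W t j‖ = ‖ω j + (W t j - ω j)‖ := by ring_nf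
          _ ≤ ‖ω j‖ + ‖W t j - ω j‖ := norm_add_le _ _
          _ ≤ 1 + ρ := by rw [hωabs]; linarith
      constructor
      · rw [add_sub_cancel_left, norm_mul]
        calc ‖c t‖ * ‖W t j‖ ≤ ‖c t‖ * (1+ρ) := mul_le_mul_of_nonneg_left hwnorm (norm_nonneg _)
          _ < u_max * (1+ρ) := mul_lt_mul_of_pos_right hulte (by linarith)
          _ ≤ δ := hum1
      · have hzball : l₀ + c t * W t j ∈ Metric.closedBall l₀ δ :=
          (hΦmaps (c t) hule j _ hwball).1
        obtain ⟨hhz, hhzlb, hgz12, hGzρ⟩ := hδball _ hzball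
        have hwm : (W t j)^m = g (l₀ + c t * W t j) := by
          conv_lhs => rw [← hwfix]
          rw [mul_pow, hωpow j, one_mul, hGpow _ (hgne _ hgz12)]
        rw [heval, add_sub_cancel_left, mul_pow, hum, hwm]
        rw [hgdef, hadef]; simp only
        field_simp
        ring
    -- backward: all roots near l₀ are of this form
    have hbwd : ∀ z : ℂ, ‖z - l₀‖ < δ → q.eval z = 0 → ∃ j : Fin m, z = l₀ + c t * W t j := by
      intro z hzδ hz0
      have hzball : z ∈ Metric.closedBall l₀ δ := by
        rw [Metric.mem_closedBall, dist_eq_norm]; exact hzδ.le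
      obtain ⟨hhz, hhzlb, hgz12, hGzρ⟩ := hδball z hzball
      have hwdef : l₀ + c t * ((z - l₀) / c t) = z := by field_simp; ring
      set w : ℂ := (z - l₀) / c t with hwdef2
      have hevz : (z - l₀)^m * h.eval z = (t:ℂ) * rc.eval z := by
        have h1 := heval z
        rw [hz0] at h1
        exact sub_eq_zero.1 h1.symm
      have hwm : w^m = g z := by
        have h2 : (z - l₀)^m = (t:ℂ) * rc.eval z / h.eval z := by
          rw [eq_div_iff hhz]; exact hevz
        rw [hwdef2, div_pow, hum, h2, hgdef, hadef]; simp only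
        field_simp
      have hζ : (w / G z)^m = 1 := by
        rw [div_pow, hwm, hGpow z (hgne z hgz12), div_self (hgne z hgz12)]
      obtain ⟨jn, hjn, hjeq⟩ := auxOmega_classify m hm0 hζ
      have hwG : w = ω ⟨jn, hjn⟩ * G z := by
        rw [div_eq_iff (hGne z)] at hjeq
        rw [hωdef]; simp only [Fin.val_mk]
        exact hjeq
      have hwball : w ∈ Metric.closedBall (ω ⟨jn, hjn⟩) ρ := by
        rw [Metric.mem_closedBall, dist_eq_norm, hwG,
          show ω ⟨jn, hjn⟩ * G z - ω ⟨jn, hjn⟩ = ω ⟨jn, hjn⟩ * (G z - 1) by ring,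
          norm_mul, hωabs, one_mul]
        exact hGzρ
      have hfixw : ω ⟨jn, hjn⟩ * G (l₀ + c t * w) = w := by
        rw [hwdef, ← hwG]
      obtain ⟨hWball, hWfix⟩ := hWspec t htε ⟨jn, hjn⟩
      have heqw : w = W t ⟨jn, hjn⟩ :=
        hΦuniq (c t) hule ⟨jn, hjn⟩ w hwball _ hWball hfixw hWfix
      exact ⟨⟨jn, hjn⟩, by rw [← hwdef, heqw]⟩
    -- each candidate root is a simple root
    have hsimple : ∀ j : Fin m, (derivative q).eval (l₀ + c t * W t j) ≠ 0 := by
      intro j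
      obtain ⟨hwball, hwfix⟩ := hWspec t htε j
      have hwd : ‖W t j - ω j‖ ≤ ρ := by rwa [Metric.mem_closedBall, dist_eq_norm] at hwball
      have hzball : l₀ + c t * W t j ∈ Metric.closedBall l₀ δ :=
        (hΦmaps (c t) hule j _ hwball).1
      obtain ⟨hhz, hhzlb, hgz12, hGzρ⟩ := hδball _ hzball
      have hzδ₁ : l₀ + c t * W t j ∈ Metric.closedBall l₀ δ₁ := hδsub1 hzball
      have hwlb : (1:ℝ)/2 ≤ ‖W t j‖ := by
        have h1 : ‖ω j‖ - ‖W t j‖ ≤ ‖W t j - ω j‖ := by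
          rw [norm_sub_rev]; exact norm_sub_norm_le _ _
        rw [hωabs] at h1; linarith
      have hwub : ‖W t j‖ ≤ 3/2 := by
        have h1 : ‖W t j‖ ≤ ‖ω j‖ + ‖W t j - ω j‖ := by
          calc ‖W t j‖ = ‖ω j + (W t j - ω j)‖ := by ring_nf
            _ ≤ ‖ω j‖ + ‖W t j - ω j‖ := norm_add_le _ _
        rw [hωabs] at h1; linarith
      have htu : (t:ℂ) = (c t)^m * h₀ / r₀ := by
        rw [hum, hadef]; field_simp
      set E : ℂ := m * (W t j)^(m-1) * h.eval (l₀ + c t * W t j)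
        + c t * ((W t j)^m * (derivative h).eval (l₀ + c t * W t j)
          - (h₀/r₀) * (derivative rc).eval (l₀ + c t * W t j)) with hEdef
      have hDval : (derivative q).eval (l₀ + c t * W t j) = (c t)^(m-1) * E := by
        rw [hderiv, hEdef, htu, add_sub_cancel_left, mul_pow, mul_pow,
          hpowm (c t), hpowm (W t j)]
        field_simp
        ring
      have hEub : ‖(W t j)^m * (derivative h).eval (l₀ + c t * W t j)
          - (h₀/r₀) * (derivative rc).eval (l₀ + c t * W t j)‖ ≤ B := by
        rw [hBdef]
        calc ‖(W t j)^m * (derivative h).eval (l₀ + c t * W t j)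
              - (h₀/r₀) * (derivative rc).eval (l₀ + c t * W t j)‖
            ≤ ‖(W t j)^m * (derivative h).eval (l₀ + c t * W t j)‖
              + ‖(h₀/r₀) * (derivative rc).eval (l₀ + c t * W t j)‖ := norm_sub_le _ _
          _ ≤ (3/2)^m * Mb + (‖h₀‖/‖r₀‖) * Mb := by
              apply add_le_add
              · rw [norm_mul, norm_pow]
                exact mul_le_mul (pow_le_pow_left₀ (norm_nonneg _) hwub m)
                  (hMbh' _ hzδ₁) (norm_nonneg _) (by positivity)
              · rw [norm_mul, norm_div]
                exact mul_le_mul_of_nonneg_left (hMbrc' _ hzδ₁) (by positivity)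
      have hElb : b ≤ ‖(m:ℂ) * (W t j)^(m-1) * h.eval (l₀ + c t * W t j)‖ := by
        rw [hbdef, norm_mul, norm_mul, norm_pow, Complex.norm_natCast]
        gcongr
      have hEpos : 0 < ‖E‖ := by
        have h2 : ‖(m:ℂ) * (W t j)^(m-1) * h.eval (l₀ + c t * W t j)‖
            ≤ ‖E‖ + ‖c t * ((W t j)^m * (derivative h).eval (l₀ + c t * W t j)
              - (h₀/r₀) * (derivative rc).eval (l₀ + c t * W t j))‖ := by
          rw [hEdef]
          calc ‖(m:ℂ) * (W t j)^(m-1) * h.eval (l₀ + c t * W t j)‖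
              = ‖((m:ℂ) * (W t j)^(m-1) * h.eval (l₀ + c t * W t j)
                  + c t * ((W t j)^m * (derivative h).eval (l₀ + c t * W t j)
                    - (h₀/r₀) * (derivative rc).eval (l₀ + c t * W t j)))
                - c t * ((W t j)^m * (derivative h).eval (l₀ + c t * W t j)
                    - (h₀/r₀) * (derivative rc).eval (l₀ + c t * W t j))‖ := by ring_nf
            _ ≤ _ := norm_sub_le _ _
        have h3 : ‖c t * ((W t j)^m * (derivative h).eval (l₀ + c t * W t j)
            - (h₀/r₀) * (derivative rc).eval (l₀ + c t * W t j))‖ ≤ u_max * B := by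
          rw [norm_mul]
          exact mul_le_mul hule hEub (norm_nonneg _) hupos.le
        have h4 : b ≤ ‖E‖ + u_max * B := le_trans hElb (le_trans h2 (add_le_add le_rfl h3))
        linarith [hum3]
      rw [hDval]
      exact mul_ne_zero (pow_ne_zero _ hu0) (fun h0 => by simp [h0] at hEpos)
    -- injectivity
    have hinj : Function.Injective (fun j : Fin m => l₀ + c t * W t j) := by
      intro j k hjk
      by_contra hne
      have hW : W t j = W t k := by
        have h1 : c t * W t j = c t * W t k := by
          have h1' : l₀ + c t * W t j = l₀ + c t * W t k := hjk
          linear_combination h1'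
        exact mul_left_cancel₀ hu0 h1
      have h2 := (hWspec t htε j).1
      have h3 := (hWspec t htε k).1
      rw [Metric.mem_closedBall, dist_eq_norm] at h2 h3
      have h4 := hρsep j k hne
      have h5 : ‖ω j - ω k‖ ≤ ‖W t k - ω j‖ + ‖W t k - ω k‖ := by
        calc ‖ω j - ω k‖ = ‖-(W t k - ω j) + (W t k - ω k)‖ := by ring_nf
          _ ≤ ‖-(W t k - ω j)‖ + ‖W t k - ω k‖ := norm_add_le _ _
          _ = ‖W t k - ω j‖ + ‖W t k - ω k‖ := by rw [norm_neg]
      rw [hW] at h2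
      linarith
    -- the multiset identity
    refine Multiset.ext.2 (fun z => ?_)
    rw [Multiset.count_filter]
    by_cases hzin : ∃ j : Fin m, l₀ + c t * W t j = z
    · obtain ⟨j, hj⟩ := hzin
      have hpred : ‖z - l₀‖ < δ := by
        rw [← hj]; exact (hzform j).1
      rw [if_pos hpred]
      have hroot : q.IsRoot z := by rw [IsRoot, ← hj]; exact (hzform j).2
      have hd1 : (derivative q).eval z ≠ 0 := by rw [← hj]; exact hsimple j
      have hge : 1 ≤ rootMultiplicity z q := (rootMultiplicity_pos hqne).2 hroot
      have hle : rootMultiplicity z q ≤ 1 := by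
        by_contra hgt
        push_neg at hgt
        have hdvd : (X - Polynomial.C z)^2 ∣ q :=
          dvd_trans (pow_dvd_pow _ (by omega)) (pow_rootMultiplicity_dvd q z)
        obtain ⟨k, hk⟩ := hdvd
        apply hd1
        rw [hk, derivative_mul, derivative_pow, derivative_X_sub_C]
        simp [eval_add, eval_mul, eval_pow, eval_sub, eval_X, eval_C]
      have hL : Multiset.count z q.roots = 1 := by rw [count_roots]; omega
      have hRc : Multiset.count z
          (Multiset.map (fun j : Fin m => l₀ + c t * W t j) Finset.univ.val) = 1 := by
        rw [← hj, Multiset.count_map_eq_count' _ _ hinj]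
        exact Multiset.count_eq_one_of_mem Finset.univ.nodup (Finset.mem_univ j)
      rw [hL]
      exact hRc.symm
    · have hR : Multiset.count z
          (Multiset.map (fun j : Fin m => l₀ + c t * W t j) Finset.univ.val) = 0 := by
        rw [Multiset.count_eq_zero]
        intro hmem
        obtain ⟨j, -, hj⟩ := Multiset.mem_map.1 hmem
        exact hzin ⟨j, hj⟩
      rw [hR]
      by_cases hpred : ‖z - l₀‖ < δ
      · rw [if_pos hpred]
        have hnroot : ¬ q.IsRoot z := by
          intro hroot
          obtain ⟨j, hj⟩ := hbwd z hpred hroot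
          exact hzin ⟨j, hj.symm⟩
        rw [count_roots, rootMultiplicity_eq_zero hnroot]
      · rw [if_neg hpred]
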